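/- Let T be a bimonad on a monoidal category C and (M,ρ) a right T-comodule (i.e., a right comodule over the coalgebra T(1)). Then the triple (T(M), μ_M, ϱ) is a right Hopf T-module, where ϱ = (id_{T(M)} ⊗ μ_1) ∘ T_2(M, T(1)) ∘ T(ρ). In particular, for any object X of C, (T(X), μ_X, T_2(X,1)) is a right Hopf T-module. -/

import Mathlib

open CategoryTheory MonoidalCategory

namespace HopfMonadPaper

variable {C : Type*} [Category C] [MonoidalCategory C]

/-- A comonoidal (oplax monoidal) structure on an endofunctor `T`,
with coproduct `δ X Y : T(X ⊗ Y) ⟶ T(X) ⊗ T(Y)` and counit `ε : T(𝟙) ⟶ 𝟙`. -/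
structure Comonoidal (T : C ⥤ C) where
  δ : ∀ X Y : C, T.obj (X ⊗ Y) ⟶ T.obj X ⊗ T.obj Y
  ε : T.obj (𝟙_ C) ⟶ 𝟙_ C
  δ_natural : ∀ {X X' Y Y' : C} (f : X ⟶ X') (g : Y ⟶ Y'),
    T.map (f ⊗ₘ g) ≫ δ X' Y' = δ X Y ≫ (T.map f ⊗ₘ T.map g)
  coassoc : ∀ X Y Z : C,
    δ (X ⊗ Y) Z ≫ (δ X Y ⊗ₘ 𝟙 (T.obj Z)) ≫ (α_ (T.obj X) (T.obj Y) (T.obj Z)).hom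
      = T.map (α_ X Y Z).hom ≫ δ X (Y ⊗ Z) ≫ (𝟙 (T.obj X) ⊗ₘ δ Y Z)
  counit_left : ∀ X : C,
    δ (𝟙_ C) X ≫ (ε ⊗ₘ 𝟙 (T.obj X)) ≫ (λ_ (T.obj X)).hom = T.map (λ_ X).hom
  counit_right : ∀ X : C,
    δ X (𝟙_ C) ≫ (𝟙 (T.obj X) ⊗ₘ ε) ≫ (ρ_ (T.obj X)).hom = T.map (ρ_ X).hom

/-- The bimonad axioms: the product and unit of the monad are comonoidal. -/
structure IsBimonad (T : Monad C) (Q : Comonoidal T.toFunctor) : Prop where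
  mu_δ : ∀ X Y : C, T.μ.app (X ⊗ Y) ≫ Q.δ X Y
    = T.map (Q.δ X Y) ≫ Q.δ (T.obj X) (T.obj Y) ≫ (T.μ.app X ⊗ₘ T.μ.app Y)
  mu_ε : T.μ.app (𝟙_ C) ≫ Q.ε = T.map Q.ε ≫ Q.ε
  eta_δ : ∀ X Y : C, T.η.app (X ⊗ Y) ≫ Q.δ X Y = T.η.app X ⊗ₘ T.η.app Y
  eta_ε : T.η.app (𝟙_ C) ≫ Q.ε = 𝟙 (𝟙_ C)

/-- A choice of left duals: `d X = ˡX` with evaluation `ev X : ˡX ⊗ X ⟶ 𝟙`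
and coevaluation `coev X : 𝟙 ⟶ X ⊗ ˡX`, satisfying the triangle identities. -/
structure LeftDualData (C : Type*) [Category C] [MonoidalCategory C] where
  d : C → C
  ev : ∀ X : C, d X ⊗ X ⟶ 𝟙_ C
  coev : ∀ X : C, 𝟙_ C ⟶ X ⊗ d X
  tri1 : ∀ X : C, (ρ_ (d X)).inv ≫ (𝟙 (d X) ⊗ₘ coev X) ≫ (α_ (d X) X (d X)).inv
    ≫ (ev X ⊗ₘ 𝟙 (d X)) ≫ (λ_ (d X)).hom = 𝟙 (d X)
  tri2 : ∀ X : C, (λ_ X).inv ≫ (coev X ⊗ₘ 𝟙 X) ≫ (α_ X (d X) X).hom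
    ≫ (𝟙 X ⊗ₘ ev X) ≫ (ρ_ X).hom = 𝟙 X

/-- Left transpose (left dual) of a morphism. -/
def LeftDualData.tr (L : LeftDualData C) {X Y : C} (f : X ⟶ Y) : L.d Y ⟶ L.d X :=
  (ρ_ (L.d Y)).inv ≫ (𝟙 (L.d Y) ⊗ₘ L.coev X) ≫ (𝟙 (L.d Y) ⊗ₘ (f ⊗ₘ 𝟙 (L.d X)))
    ≫ (α_ (L.d Y) Y (L.d X)).inv ≫ (L.ev Y ⊗ₘ 𝟙 (L.d X)) ≫ (λ_ (L.d X)).hom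

/-- A choice of right duals: `d X = ʳX` with evaluation `ev X : X ⊗ ʳX ⟶ 𝟙`
and coevaluation `coev X : 𝟙 ⟶ ʳX ⊗ X`, satisfying the triangle identities. -/
structure RightDualData (C : Type*) [Category C] [MonoidalCategory C] where
  d : C → C
  ev : ∀ X : C, X ⊗ d X ⟶ 𝟙_ C
  coev : ∀ X : C, 𝟙_ C ⟶ d X ⊗ X
  tri1 : ∀ X : C, (ρ_ X).inv ≫ (𝟙 X ⊗ₘ coev X) ≫ (α_ X (d X) X).inv
    ≫ (ev X ⊗ₘ 𝟙 X) ≫ (λ_ X).hom = 𝟙 X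
  tri2 : ∀ X : C, (λ_ (d X)).inv ≫ (coev X ⊗ₘ 𝟙 (d X)) ≫ (α_ (d X) X (d X)).hom
    ≫ (𝟙 (d X) ⊗ₘ ev X) ≫ (ρ_ (d X)).hom = 𝟙 (d X)

/-- Right transpose (right dual) of a morphism. -/
def RightDualData.tr (R : RightDualData C) {X Y : C} (f : X ⟶ Y) : R.d Y ⟶ R.d X :=
  (λ_ (R.d Y)).inv ≫ (R.coev X ⊗ₘ 𝟙 (R.d Y)) ≫ (α_ (R.d X) X (R.d Y)).hom
    ≫ (𝟙 (R.d X) ⊗ₘ (f ⊗ₘ 𝟙 (R.d Y))) ≫ (𝟙 (R.d X) ⊗ₘ R.ev Y) ≫ (ρ_ (R.d X)).hom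

/-- The axioms for a left antipode `s X : T(ˡT(X)) ⟶ ˡX` of a bimonad. -/
structure IsLeftAntipode (T : Monad C) (Q : Comonoidal T.toFunctor) (L : LeftDualData C)
    (s : ∀ X : C, T.obj (L.d (T.obj X)) ⟶ L.d X) : Prop where
  natural : ∀ {X Y : C} (f : X ⟶ Y),
    T.map (L.tr (T.map f)) ≫ s X = s Y ≫ L.tr f
  lant1 : ∀ X : C,
    T.map (L.tr (T.η.app X) ⊗ₘ 𝟙 X) ≫ T.map (L.ev X) ≫ Q.ε
      = Q.δ (L.d (T.obj X)) X
        ≫ ((T.map (L.tr (T.μ.app X)) ≫ s (T.obj X)) ⊗ₘ 𝟙 (T.obj X)) ≫ L.ev (T.obj X)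
  lant2 : ∀ X : C,
    Q.ε ≫ L.coev X ≫ (T.η.app X ⊗ₘ 𝟙 (L.d X))
      = T.map (L.coev (T.obj X)) ≫ Q.δ (T.obj X) (L.d (T.obj X)) ≫ (T.μ.app X ⊗ₘ s X)

/-- The axioms for a right antipode `s X : T(ʳT(X)) ⟶ ʳX` of a bimonad. -/
structure IsRightAntipode (T : Monad C) (Q : Comonoidal T.toFunctor) (R : RightDualData C)
    (s : ∀ X : C, T.obj (R.d (T.obj X)) ⟶ R.d X) : Prop where
  natural : ∀ {X Y : C} (f : X ⟶ Y),
    T.map (R.tr (T.map f)) ≫ s X = s Y ≫ R.tr f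
  rant1 : ∀ X : C,
    T.map (𝟙 X ⊗ₘ R.tr (T.η.app X)) ≫ T.map (R.ev X) ≫ Q.ε
      = Q.δ X (R.d (T.obj X))
        ≫ (𝟙 (T.obj X) ⊗ₘ (T.map (R.tr (T.μ.app X)) ≫ s (T.obj X))) ≫ R.ev (T.obj X)
  rant2 : ∀ X : C,
    Q.ε ≫ R.coev X ≫ (𝟙 (R.d X) ⊗ₘ T.η.app X)
      = T.map (R.coev (T.obj X)) ≫ Q.δ (R.d (T.obj X)) (T.obj X) ≫ (s X ⊗ₘ T.μ.app X)

/-- The canonical morphism `X ⟶ ʳ(ˡX)`. -/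
def canRL (L : LeftDualData C) (R : RightDualData C) (X : C) : X ⟶ R.d (L.d X) :=
  (λ_ X).inv ≫ (R.coev (L.d X) ⊗ₘ 𝟙 X) ≫ (α_ (R.d (L.d X)) (L.d X) X).hom
    ≫ (𝟙 (R.d (L.d X)) ⊗ₘ L.ev X) ≫ (ρ_ (R.d (L.d X))).hom

/-- The canonical morphism `ʳ(ˡX) ⟶ X`. -/
def canRLinv (L : LeftDualData C) (R : RightDualData C) (X : C) : R.d (L.d X) ⟶ X :=
  (λ_ (R.d (L.d X))).inv ≫ (L.coev X ⊗ₘ 𝟙 (R.d (L.d X)))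
    ≫ (α_ X (L.d X) (R.d (L.d X))).hom ≫ (𝟙 X ⊗ₘ R.ev (L.d X)) ≫ (ρ_ X).hom

/-- The canonical morphism `X ⟶ ˡ(ʳX)`. -/
def canLR (L : LeftDualData C) (R : RightDualData C) (X : C) : X ⟶ L.d (R.d X) :=
  (ρ_ X).inv ≫ (𝟙 X ⊗ₘ L.coev (R.d X)) ≫ (α_ X (R.d X) (L.d (R.d X))).inv
    ≫ (R.ev X ⊗ₘ 𝟙 (L.d (R.d X))) ≫ (λ_ (L.d (R.d X))).hom

/-- The canonical morphism `ˡ(ʳX) ⟶ X`. -/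
def canLRinv (L : LeftDualData C) (R : RightDualData C) (X : C) : L.d (R.d X) ⟶ X :=
  (ρ_ (L.d (R.d X))).inv ≫ (𝟙 (L.d (R.d X)) ⊗ₘ R.coev X)
    ≫ (α_ (L.d (R.d X)) (R.d X) X).inv ≫ (L.ev (R.d X) ⊗ₘ 𝟙 X) ≫ (λ_ X).hom


/-- The comultiplication `T_2(𝟙,𝟙)` of the coalgebra `T(𝟙)`. -/
def Delta1 (T : C ⥤ C) (Q : Comonoidal T) :
    T.obj (𝟙_ C) ⟶ T.obj (𝟙_ C) ⊗ T.obj (𝟙_ C) :=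
  T.map (λ_ (𝟙_ C)).inv ≫ Q.δ (𝟙_ C) (𝟙_ C)

/-- A right `T`-comodule, i.e. a right comodule over the coalgebra `T(𝟙)`
(with comultiplication `T_2(𝟙,𝟙)` and counit `T_0`). -/
structure IsRightComodule (T : C ⥤ C) (Q : Comonoidal T)
    (M : C) (ρ : M ⟶ M ⊗ T.obj (𝟙_ C)) : Prop where
  coassoc : ρ ≫ (ρ ⊗ₘ 𝟙 (T.obj (𝟙_ C))) ≫ (α_ M (T.obj (𝟙_ C)) (T.obj (𝟙_ C))).hom
    = ρ ≫ (𝟙 M ⊗ₘ Delta1 T Q)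
  counit : ρ ≫ (𝟙 M ⊗ₘ Q.ε) ≫ (ρ_ M).hom = 𝟙 M

/-- A right Hopf `T`-module: a `T`-module and right `T`-comodule satisfying the
compatibility `ρ ∘ r = (r ⊗ μ_𝟙) ∘ T_2(M,T(𝟙)) ∘ T(ρ)`. -/
structure IsRightHopfModule (T : Monad C) (Q : Comonoidal T.toFunctor)
    (M : C) (r : T.obj M ⟶ M) (ρ : M ⟶ M ⊗ T.obj (𝟙_ C)) : Prop where
  unit : T.η.app M ≫ r = 𝟙 M
  assoc : T.μ.app M ≫ r = T.map r ≫ r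
  comodule : IsRightComodule T.toFunctor Q M ρ
  hopf : r ≫ ρ = T.map ρ ≫ Q.δ M (T.obj (𝟙_ C)) ≫ (r ⊗ₘ T.μ.app (𝟙_ C))

lemma muDelta (T : Monad C) (Q : Comonoidal T.toFunctor) (hB : IsBimonad T Q) :
    T.μ.app (𝟙_ C) ≫ Delta1 T.toFunctor Q
      = T.map (Delta1 T.toFunctor Q) ≫ Q.δ (T.obj (𝟙_ C)) (T.obj (𝟙_ C))
          ≫ (T.μ.app (𝟙_ C) ⊗ₘ T.μ.app (𝟙_ C)) := by
  have hnat := T.μ.naturality (λ_ (𝟙_ C)).inv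
  simp only [Functor.comp_map] at hnat
  simp only [Delta1, CategoryTheory.Functor.map_comp, Category.assoc, ← reassoc_of% hnat, hB.mu_δ]

lemma mainLemma (T : Monad C) (Q : Comonoidal T.toFunctor) (hB : IsBimonad T Q)
    (M : C) (ρ : M ⟶ M ⊗ T.obj (𝟙_ C)) (hM : IsRightComodule T.toFunctor Q M ρ) :
    IsRightHopfModule T Q (T.obj M) (T.μ.app M)
      (T.map ρ ≫ Q.δ M (T.obj (𝟙_ C)) ≫ (𝟙 (T.obj M) ⊗ₘ T.μ.app (𝟙_ C))) := by
  have hd1 : Q.δ M (T.obj (𝟙_ C)) ≫ (𝟙 (T.obj M) ⊗ₘ T.map Q.ε)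
      = T.map (𝟙 M ⊗ₘ Q.ε) ≫ Q.δ M (𝟙_ C) := by
    have h := (Q.δ_natural (𝟙 M) Q.ε).symm
    simpa only [CategoryTheory.Functor.map_id] using h
  refine ⟨T.left_unit M, (T.assoc M).symm, ⟨?_, ?_⟩, ?_⟩
  · -- comodule coassoc
    have hd2 : Q.δ M (T.obj (𝟙_ C)) ≫ (𝟙 (T.obj M) ⊗ₘ T.map (Delta1 T.toFunctor Q))
        = T.map (𝟙 M ⊗ₘ Delta1 T.toFunctor Q)
            ≫ Q.δ M (T.obj (𝟙_ C) ⊗ T.obj (𝟙_ C)) := by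
      have h := (Q.δ_natural (𝟙 M) (Delta1 T.toFunctor Q)).symm
      simpa only [CategoryTheory.Functor.map_id] using h
    have hd3 : Q.δ M (T.obj (𝟙_ C)) ≫ (T.map ρ ⊗ₘ 𝟙 (T.obj (T.obj (𝟙_ C))))
        = T.map (ρ ⊗ₘ 𝟙 (T.obj (𝟙_ C))) ≫ Q.δ (M ⊗ T.obj (𝟙_ C)) (T.obj (𝟙_ C)) := by
      have h := (Q.δ_natural ρ (𝟙 (T.obj (𝟙_ C)))).symm
      simpa only [CategoryTheory.Functor.map_id] using h
    have hR : (T.map ρ ≫ Q.δ M (T.obj (𝟙_ C)) ≫ (𝟙 (T.obj M) ⊗ₘ T.μ.app (𝟙_ C)))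
          ≫ (𝟙 (T.obj M) ⊗ₘ Delta1 T.toFunctor Q)
        = T.map ρ ≫ T.map (ρ ⊗ₘ 𝟙 (T.obj (𝟙_ C)))
            ≫ Q.δ (M ⊗ T.obj (𝟙_ C)) (T.obj (𝟙_ C))
            ≫ (Q.δ M (T.obj (𝟙_ C)) ⊗ₘ 𝟙 (T.obj (T.obj (𝟙_ C))))
            ≫ (α_ (T.obj M) (T.obj (T.obj (𝟙_ C))) (T.obj (T.obj (𝟙_ C)))).hom
            ≫ (𝟙 (T.obj M) ⊗ₘ (T.μ.app (𝟙_ C) ⊗ₘ T.μ.app (𝟙_ C))) := by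
      simp only [Category.assoc]
      slice_lhs 3 4 => rw [← id_tensor_comp, muDelta T Q hB, id_tensor_comp,
        id_tensor_comp]
      slice_lhs 2 3 => rw [hd2]
      slice_lhs 1 2 => rw [← CategoryTheory.Functor.map_comp, ← hM.coassoc, CategoryTheory.Functor.map_comp,
        CategoryTheory.Functor.map_comp]
      slice_lhs 3 5 => rw [← Q.coassoc M (T.obj (𝟙_ C)) (T.obj (𝟙_ C))]
      simp only [Category.assoc]
    have hL : (T.map ρ ≫ Q.δ M (T.obj (𝟙_ C)) ≫ (𝟙 (T.obj M) ⊗ₘ T.μ.app (𝟙_ C)))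
          ≫ ((T.map ρ ≫ Q.δ M (T.obj (𝟙_ C)) ≫ (𝟙 (T.obj M) ⊗ₘ T.μ.app (𝟙_ C)))
              ⊗ₘ 𝟙 (T.obj (𝟙_ C)))
          ≫ (α_ (T.obj M) (T.obj (𝟙_ C)) (T.obj (𝟙_ C))).hom
        = T.map ρ ≫ T.map (ρ ⊗ₘ 𝟙 (T.obj (𝟙_ C)))
            ≫ Q.δ (M ⊗ T.obj (𝟙_ C)) (T.obj (𝟙_ C))
            ≫ (Q.δ M (T.obj (𝟙_ C)) ⊗ₘ 𝟙 (T.obj (T.obj (𝟙_ C))))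
            ≫ (α_ (T.obj M) (T.obj (T.obj (𝟙_ C))) (T.obj (T.obj (𝟙_ C)))).hom
            ≫ (𝟙 (T.obj M) ⊗ₘ (T.μ.app (𝟙_ C) ⊗ₘ T.μ.app (𝟙_ C))) := by
      simp only [comp_tensor_id, Category.assoc]
      slice_lhs 3 4 => rw [id_tensor_comp_tensor_id, ← tensor_id_comp_id_tensor]
      slice_lhs 2 3 => rw [hd3]
      slice_lhs 4 5 => rw [id_tensor_comp_tensor_id, ← tensor_id_comp_id_tensor]
      slice_lhs 5 6 => rw [id_tensor_comp_tensor_id]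
      slice_lhs 5 6 => rw [associator_naturality]
    rw [hL, hR]
  · -- comodule counit
    simp only [Category.assoc]
    slice_lhs 3 4 => rw [← id_tensor_comp, hB.mu_ε, id_tensor_comp]
    slice_lhs 2 3 => rw [hd1]
    slice_lhs 3 5 => rw [Q.counit_right]
    slice_lhs 1 3 => rw [← CategoryTheory.Functor.map_comp, ← CategoryTheory.Functor.map_comp]
    rw [show ρ ≫ (𝟙 M ⊗ₘ Q.ε) ≫ (ρ_ M).hom = 𝟙 M from hM.counit, CategoryTheory.Functor.map_id]
  · -- hopf
    have hμρ := T.μ.naturality ρ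
    simp only [Functor.comp_map] at hμρ
    have hd4 : Q.δ (T.obj M) (T.obj (T.obj (𝟙_ C)))
          ≫ (𝟙 (T.obj (T.obj M)) ⊗ₘ T.map (T.μ.app (𝟙_ C)))
        = T.map (𝟙 (T.obj M) ⊗ₘ T.μ.app (𝟙_ C)) ≫ Q.δ (T.obj M) (T.obj (𝟙_ C)) := by
      have h := (Q.δ_natural (𝟙 (T.obj M)) (T.μ.app (𝟙_ C))).symm
      simp only [CategoryTheory.Functor.map_id] at h
      exact h
    slice_lhs 1 2 => rw [← hμρ]
    slice_lhs 2 3 => rw [hB.mu_δ M (T.obj (𝟙_ C))]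
    slice_lhs 4 5 => rw [tensorHom_comp_tensorHom, Category.comp_id, ← T.assoc (𝟙_ C)]
    rw [show T.μ.app M ⊗ₘ (T.map (T.μ.app (𝟙_ C)) ≫ T.μ.app (𝟙_ C))
        = (𝟙 (T.obj (T.obj M)) ⊗ₘ T.map (T.μ.app (𝟙_ C)))
          ≫ (T.μ.app M ⊗ₘ T.μ.app (𝟙_ C)) from by
      rw [tensorHom_comp_tensorHom, Category.id_comp]]
    slice_lhs 3 4 => rw [hd4]
    simp only [CategoryTheory.Functor.map_comp, Category.assoc]


lemma trivialComodule (T : Monad C) (Q : Comonoidal T.toFunctor) (hB : IsBimonad T Q)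
    (X : C) : IsRightComodule T.toFunctor Q X
      ((ρ_ X).inv ≫ (𝟙 X ⊗ₘ T.η.app (𝟙_ C))) := by
  constructor
  · have hη : T.η.app (𝟙_ C) ≫ Delta1 T.toFunctor Q
        = (λ_ (𝟙_ C)).inv ≫ (T.η.app (𝟙_ C) ⊗ₘ T.η.app (𝟙_ C)) := by
      have h := T.η.naturality (λ_ (𝟙_ C)).inv
      simp only [Functor.id_map] at h
      rw [Delta1, ← Category.assoc, ← h, Category.assoc, hB.eta_δ]
    have key : (ρ_ X).inv ≫ ((ρ_ X).inv ⊗ₘ 𝟙 (𝟙_ C)) ≫ (α_ X (𝟙_ C) (𝟙_ C)).hom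
        = (ρ_ X).inv ≫ (𝟙 X ⊗ₘ (λ_ (𝟙_ C)).inv) := by
      coherence
    calc ((ρ_ X).inv ≫ (𝟙 X ⊗ₘ T.η.app (𝟙_ C)))
          ≫ (((ρ_ X).inv ≫ (𝟙 X ⊗ₘ T.η.app (𝟙_ C))) ⊗ₘ 𝟙 (T.obj (𝟙_ C)))
          ≫ (α_ X (T.obj (𝟙_ C)) (T.obj (𝟙_ C))).hom
        = (ρ_ X).inv ≫ ((ρ_ X).inv ⊗ₘ 𝟙 (𝟙_ C)) ≫ (α_ X (𝟙_ C) (𝟙_ C)).hom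
            ≫ (𝟙 X ⊗ₘ (T.η.app (𝟙_ C) ⊗ₘ T.η.app (𝟙_ C))) := by
          simp only [comp_tensor_id, Category.assoc]
          slice_lhs 2 3 => rw [id_tensor_comp_tensor_id, ← tensor_id_comp_id_tensor]
          slice_lhs 3 4 => rw [id_tensor_comp_tensor_id]
          slice_lhs 3 4 => rw [associator_naturality]
      _ = ((ρ_ X).inv ≫ (𝟙 X ⊗ₘ T.η.app (𝟙_ C))) ≫ (𝟙 X ⊗ₘ Delta1 T.toFunctor Q) := by
          slice_lhs 1 3 => rw [key]
          simp only [Category.assoc, ← id_tensor_comp, hη]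
  · slice_lhs 2 3 => rw [← id_tensor_comp, hB.eta_ε]
    simp

lemma rhoEq (T : Monad C) (Q : Comonoidal T.toFunctor) (X : C) :
    T.map ((ρ_ X).inv ≫ (𝟙 X ⊗ₘ T.η.app (𝟙_ C))) ≫ Q.δ X (T.obj (𝟙_ C))
        ≫ (𝟙 (T.obj X) ⊗ₘ T.μ.app (𝟙_ C))
      = T.map (ρ_ X).inv ≫ Q.δ X (𝟙_ C) := by
  rw [CategoryTheory.Functor.map_comp, Category.assoc]
  slice_lhs 2 3 => rw [Q.δ_natural (𝟙 X) (T.η.app (𝟙_ C))]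
  simp only [CategoryTheory.Functor.map_id, Category.assoc, ← id_tensor_comp,
    Monad.right_unit, MonoidalCategory.id_tensorHom_id, Category.comp_id, Functor.id_obj]


/-- For a bimonad `T` and a right `T`-comodule `(M,ρ)`, the triple
`(T(M), μ_M, ϱ)` with `ϱ = (id ⊗ μ_𝟙) ∘ T_2(M,T(𝟙)) ∘ T(ρ)` is a right Hopf
`T`-module; in particular `(T(X), μ_X, T_2(X,𝟙))` is a right Hopf `T`-module for
every object `X`. -/
theorem stmt13 (T : Monad C) (Q : Comonoidal T.toFunctor) (hB : IsBimonad T Q) :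
    (∀ (M : C) (ρ : M ⟶ M ⊗ T.obj (𝟙_ C)),
      IsRightComodule T.toFunctor Q M ρ →
      IsRightHopfModule T Q (T.obj M) (T.μ.app M)
        (T.map ρ ≫ Q.δ M (T.obj (𝟙_ C)) ≫ (𝟙 (T.obj M) ⊗ₘ T.μ.app (𝟙_ C)))) ∧
    (∀ X : C,
      IsRightHopfModule T Q (T.obj X) (T.μ.app X)
        (T.map (ρ_ X).inv ≫ Q.δ X (𝟙_ C))) := by
  refine ⟨fun M ρ h => mainLemma T Q hB M ρ h, fun X => ?_⟩
  have h := mainLemma T Q hB X _ (trivialComodule T Q hB X)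
  rwa [rhoEq T Q X] at h

end HopfMonadPaper
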